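/- Let p ≥ 2 be an integer and set r = 2^(1/(p−1)). Then M₃^p ⊆ D̄₃(0; r, r), where D̄₃(0; r₁, r₂) = {(ζ₁,ζ₂) ∈ 𝕄(3) : ‖ζ₁ − ζ₂·i₂‖₂ ≤ r₁ and ‖ζ₁ + ζ₂·i₂‖₂ ≤ r₂} is the closed tricomplex discus. -/

import Mathlib

/-- Bicomplex multiplication on ℂ × ℂ. -/
def bcMul (z w : ℂ × ℂ) : ℂ × ℂ := (z.1 * w.1 - z.2 * w.2, z.1 * w.2 + z.2 * w.1)

/-- n-th power of a bicomplex number. -/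
def bcPow (z : ℂ × ℂ) : ℕ → ℂ × ℂ
  | 0 => (1, 0)
  | n + 1 => bcMul (bcPow z n) z

/-- The bicomplex norm ‖(z₁,z₂)‖₂ = √(|z₁|² + |z₂|²). -/
noncomputable def bcNorm (z : ℂ × ℂ) : ℝ :=
  Real.sqrt (‖z.1‖ ^ 2 + ‖z.2‖ ^ 2)

/-- The bicomplex polynomial Q_{p,c}(ζ) = ζ^p + c. -/
def bcQ (p : ℕ) (c : ℂ × ℂ) (z : ℂ × ℂ) : ℂ × ℂ := bcPow z p + c

/-- The bicomplex Multibrot set M₂^p. -/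
def M2 (p : ℕ) : Set (ℂ × ℂ) :=
  {c | ∃ M : ℝ, ∀ m : ℕ, 1 ≤ m → bcNorm ((bcQ p c)^[m] (0, 0)) ≤ M}

/-- The unit i₂ = (0,1) of 𝕄(2). -/
def i2 : ℂ × ℂ := (0, 1)

/-- Tricomplex multiplication on 𝕄(2) × 𝕄(2). -/
def tcMul (z w : (ℂ × ℂ) × (ℂ × ℂ)) : (ℂ × ℂ) × (ℂ × ℂ) :=
  (bcMul z.1 w.1 - bcMul z.2 w.2, bcMul z.1 w.2 + bcMul z.2 w.1)

/-- n-th power of a tricomplex number. -/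
def tcPow (z : (ℂ × ℂ) × (ℂ × ℂ)) : ℕ → (ℂ × ℂ) × (ℂ × ℂ)
  | 0 => ((1, 0), (0, 0))
  | n + 1 => tcMul (tcPow z n) z

/-- The tricomplex norm ‖(ζ₁,ζ₂)‖₃ = √(‖ζ₁‖₂² + ‖ζ₂‖₂²). -/
noncomputable def tcNorm (z : (ℂ × ℂ) × (ℂ × ℂ)) : ℝ :=
  Real.sqrt (bcNorm z.1 ^ 2 + bcNorm z.2 ^ 2)

/-- The tricomplex polynomial Q_{p,c}(η) = η^p + c. -/
def tcQ (p : ℕ) (c : (ℂ × ℂ) × (ℂ × ℂ)) (z : (ℂ × ℂ) × (ℂ × ℂ)) :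
    (ℂ × ℂ) × (ℂ × ℂ) := tcPow z p + c

/-- The tricomplex Multibrot set M₃^p. -/
def M3 (p : ℕ) : Set ((ℂ × ℂ) × (ℂ × ℂ)) :=
  {c | ∃ M : ℝ, ∀ m : ℕ, 1 ≤ m → tcNorm ((tcQ p c)^[m] ((0, 0), (0, 0))) ≤ M}

/-- bicomplex-level projection ℂ×ℂ → ℂ -/
def gpr (s : ℂ) (z : ℂ × ℂ) : ℂ := z.1 + s * z.2

/-- tricomplex → bicomplex projection -/
def beta (e : ℂ × ℂ) (η : (ℂ × ℂ) × (ℂ × ℂ)) : ℂ × ℂ := η.1 + bcMul η.2 e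

lemma gpr_mul (s : ℂ) (hs : s * s = -1) (z w : ℂ × ℂ) :
    gpr s (bcMul z w) = gpr s z * gpr s w := by
  simp only [gpr, bcMul]
  linear_combination (-(z.2 * w.2)) * hs

lemma gpr_add (s : ℂ) (z w : ℂ × ℂ) : gpr s (z + w) = gpr s z + gpr s w := by
  simp [gpr]; ring

lemma beta_mul (e : ℂ × ℂ) (he : bcMul e e = (-1, 0)) (z w : (ℂ × ℂ) × (ℂ × ℂ)) :
    beta e (tcMul z w) = bcMul (beta e z) (beta e w) := by
  have h1 : e.1 * e.1 - e.2 * e.2 = -1 := congrArg Prod.fst he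
  have h2 : e.1 * e.2 + e.2 * e.1 = 0 := congrArg Prod.snd he
  simp only [beta, tcMul, bcMul, Prod.ext_iff, Prod.mk_add_mk, Prod.mk_sub_mk, Prod.fst_add,
    Prod.snd_add, Prod.mk.injEq, Prod.fst_sub, Prod.snd_sub]
  constructor
  · linear_combination (-(z.2.1 * w.2.1 - z.2.2 * w.2.2)) * h1 + (z.2.1 * w.2.2 + z.2.2 * w.2.1) * h2
  · linear_combination (-(z.2.1 * w.2.2 + z.2.2 * w.2.1)) * h1 - (z.2.1 * w.2.1 - z.2.2 * w.2.2) * h2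

lemma beta_add (e : ℂ × ℂ) (z w : (ℂ × ℂ) × (ℂ × ℂ)) :
    beta e (z + w) = beta e z + beta e w := by
  simp only [beta, bcMul, Prod.ext_iff, Prod.fst_add, Prod.snd_add, Prod.mk_add_mk,
    Prod.mk.injEq]
  constructor <;> ring

def cproj (s : ℂ) (e : ℂ × ℂ) (η : (ℂ × ℂ) × (ℂ × ℂ)) : ℂ := gpr s (beta e η)

lemma cproj_add (s : ℂ) (e : ℂ × ℂ) (z w) : cproj s e (z + w) = cproj s e z + cproj s e w := by
  rw [cproj, beta_add, gpr_add]; rfl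

lemma cproj_mul (s : ℂ) (hs : s * s = -1) (e : ℂ × ℂ) (he : bcMul e e = (-1, 0)) (z w) :
    cproj s e (tcMul z w) = cproj s e z * cproj s e w := by
  rw [cproj, beta_mul e he, gpr_mul s hs]; rfl

lemma cproj_pow (s : ℂ) (hs : s * s = -1) (e : ℂ × ℂ) (he : bcMul e e = (-1, 0)) (z) (n : ℕ) :
    cproj s e (tcPow z n) = (cproj s e z) ^ n := by
  induction n with
  | zero => simp [tcPow, cproj, gpr, beta, bcMul]
  | succ n ih => rw [tcPow, cproj_mul s hs e he, ih, pow_succ]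

lemma cproj_iter (s : ℂ) (hs : s * s = -1) (e : ℂ × ℂ) (he : bcMul e e = (-1, 0))
    (p : ℕ) (c : (ℂ × ℂ) × (ℂ × ℂ)) (m : ℕ) :
    cproj s e ((tcQ p c)^[m] ((0,0),(0,0))) =
      (fun z : ℂ => z ^ p + cproj s e c)^[m] 0 := by
  induction m with
  | zero => simp [cproj, gpr, beta, bcMul]
  | succ m ih =>
    rw [Function.iterate_succ_apply', Function.iterate_succ_apply', tcQ,
      cproj_add, cproj_pow s hs e he, ih]

lemma bcNorm_nonneg (z : ℂ × ℂ) : 0 ≤ bcNorm z := Real.sqrt_nonneg _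

lemma abs_fst_le (z : ℂ × ℂ) : ‖z.1‖ ≤ bcNorm z := by
  rw [bcNorm]
  conv_lhs => rw [← Real.sqrt_sq (norm_nonneg z.1)]
  exact Real.sqrt_le_sqrt (le_add_of_nonneg_right (sq_nonneg _))

lemma abs_snd_le (z : ℂ × ℂ) : ‖z.2‖ ≤ bcNorm z := by
  rw [bcNorm]
  conv_lhs => rw [← Real.sqrt_sq (norm_nonneg z.2)]
  exact Real.sqrt_le_sqrt (le_add_of_nonneg_left (sq_nonneg _))

lemma bcNorm_fst_le (η : (ℂ × ℂ) × (ℂ × ℂ)) : bcNorm η.1 ≤ tcNorm η := by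
  rw [tcNorm]
  conv_lhs => rw [← Real.sqrt_sq (bcNorm_nonneg η.1)]
  exact Real.sqrt_le_sqrt (le_add_of_nonneg_right (sq_nonneg _))

lemma bcNorm_snd_le (η : (ℂ × ℂ) × (ℂ × ℂ)) : bcNorm η.2 ≤ tcNorm η := by
  rw [tcNorm]
  conv_lhs => rw [← Real.sqrt_sq (bcNorm_nonneg η.2)]
  exact Real.sqrt_le_sqrt (le_add_of_nonneg_left (sq_nonneg _))

lemma cproj_abs_le (s : ℂ) (hs : ‖s‖ = 1) (e : ℂ × ℂ)
    (hbe : ∀ z, bcNorm (bcMul z e) ≤ bcNorm z) (η : (ℂ × ℂ) × (ℂ × ℂ)) :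
    ‖cproj s e η‖ ≤ 4 * tcNorm η := by
  have h1 : ‖cproj s e η‖ ≤ 2 * bcNorm (beta e η) := by
    calc ‖cproj s e η‖ ≤ ‖(beta e η).1‖ + ‖s * (beta e η).2‖ :=
          norm_add_le _ _
      _ = ‖(beta e η).1‖ + ‖(beta e η).2‖ := by rw [norm_mul, hs, one_mul]
      _ ≤ bcNorm (beta e η) + bcNorm (beta e η) := add_le_add (abs_fst_le _) (abs_snd_le _)
      _ = 2 * bcNorm (beta e η) := by ring
  have h2 : bcNorm (beta e η) ≤ 2 * tcNorm η := by
    calc bcNorm (beta e η) ≤ bcNorm η.1 + bcNorm (bcMul η.2 e) := by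
          rw [beta]
          -- triangle inequality for bcNorm
          have tri : ∀ z w : ℂ × ℂ, bcNorm (z + w) ≤ bcNorm z + bcNorm w := by
            intro z w
            have key : ∀ x₁ y₁ x₂ y₂ : ℝ, Real.sqrt ((x₁ + x₂) ^ 2 + (y₁ + y₂) ^ 2) ≤
                Real.sqrt (x₁ ^ 2 + y₁ ^ 2) + Real.sqrt (x₂ ^ 2 + y₂ ^ 2) := by
              intro x₁ y₁ x₂ y₂
              have := norm_add_le (⟨x₁, y₁⟩ : ℂ) (⟨x₂, y₂⟩ : ℂ)
              simpa [Complex.norm_def, Complex.normSq_apply, Complex.add_re, Complex.add_im, sq] using this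
            calc bcNorm (z + w)
                = Real.sqrt (‖z.1 + w.1‖ ^ 2 + ‖z.2 + w.2‖ ^ 2) := rfl
              _ ≤ Real.sqrt ((‖z.1‖ + ‖w.1‖) ^ 2 +
                    (‖z.2‖ + ‖w.2‖) ^ 2) := by
                  apply Real.sqrt_le_sqrt
                  gcongr <;> [exact norm_add_le _ _; exact norm_add_le _ _]
              _ ≤ Real.sqrt (‖z.1‖ ^ 2 + ‖z.2‖ ^ 2) +
                    Real.sqrt (‖w.1‖ ^ 2 + ‖w.2‖ ^ 2) := key _ _ _ _
              _ = bcNorm z + bcNorm w := rfl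
          exact tri _ _
      _ ≤ bcNorm η.1 + bcNorm η.2 := add_le_add le_rfl (hbe _)
      _ ≤ tcNorm η + tcNorm η := add_le_add (bcNorm_fst_le _) (bcNorm_snd_le _)
      _ = 2 * tcNorm η := by ring
  linarith

/-- parallelogram-style bound -/
lemma bcNorm_le_of_proj (z : ℂ × ℂ) (r : ℝ) (hr : 0 ≤ r)
    (h1 : ‖z.1 + Complex.I * z.2‖ ≤ r)
    (h2 : ‖z.1 - Complex.I * z.2‖ ≤ r) : bcNorm z ≤ r := by
  have key : ‖z.1‖ ^ 2 + ‖z.2‖ ^ 2 =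
      (‖z.1 + Complex.I * z.2‖ ^ 2 + ‖z.1 - Complex.I * z.2‖ ^ 2) / 2 := by
    simp only [Complex.sq_norm, Complex.normSq_apply, Complex.add_re, Complex.add_im,
      Complex.sub_re, Complex.sub_im, Complex.mul_re, Complex.mul_im, Complex.I_re, Complex.I_im]
    ring
  have b1 : ‖z.1 + Complex.I * z.2‖ ^ 2 ≤ r ^ 2 :=
    pow_le_pow_left₀ (norm_nonneg _) h1 2
  have b2 : ‖z.1 - Complex.I * z.2‖ ^ 2 ≤ r ^ 2 :=
    pow_le_pow_left₀ (norm_nonneg _) h2 2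
  rw [bcNorm, key, ← Real.sqrt_sq hr]
  apply Real.sqrt_le_sqrt
  linarith

/-- the complex-level escape bound -/
lemma complex_escape (p : ℕ) (hp : 2 ≤ p) (c : ℂ) (M : ℝ)
    (h : ∀ m : ℕ, 1 ≤ m → ‖(fun z : ℂ => z ^ p + c)^[m] 0‖ ≤ M) :
    ‖c‖ ≤ (2 : ℝ) ^ ((1 : ℝ) / ((p : ℝ) - 1)) := by
  set r : ℝ := (2 : ℝ) ^ ((1 : ℝ) / ((p : ℝ) - 1)) with hrdef
  by_contra hlt
  push_neg at hlt
  have hpReal : (1 : ℝ) ≤ (p : ℝ) - 1 := by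
    have : (2 : ℝ) ≤ (p : ℝ) := by exact_mod_cast hp
    linarith
  have hrpos : 0 < r := Real.rpow_pos_of_pos (by norm_num) _
  set a : ℝ := ‖c‖ with hadef
  have ha : 0 < a := lt_trans hrpos hlt
  have hrpow : r ^ (p - 1) = 2 := by
    rw [hrdef, ← Real.rpow_natCast ((2:ℝ) ^ ((1:ℝ)/((p:ℝ)-1))) (p-1),
      ← Real.rpow_mul (by norm_num : (0:ℝ) ≤ 2)]
    have : ((p - 1 : ℕ) : ℝ) = (p : ℝ) - 1 := by
      have := Nat.cast_sub (by omega : 1 ≤ p) (R := ℝ); simpa using this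
    rw [this, one_div, inv_mul_cancel₀ (by linarith), Real.rpow_one]
  have hapow : 2 < a ^ (p - 1) := by
    rw [← hrpow]
    exact pow_lt_pow_left₀ hlt hrpos.le (by omega)
  set q : ℝ := a ^ (p - 1) - 1 with hqdef
  have hq : 1 < q := by simp only [hqdef]; linarith
  have claim : ∀ m : ℕ, a * q ^ m ≤ ‖(fun z : ℂ => z ^ p + c)^[m + 1] 0‖ := by
    intro m
    induction m with
    | zero =>
      have h0 : (fun z : ℂ => z ^ p + c)^[1] 0 = c := by
        simp [zero_pow (by omega : p ≠ 0)]
      rw [pow_zero, mul_one, h0]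
    | succ m ih =>
      set z : ℂ := (fun z : ℂ => z ^ p + c)^[m + 1] 0 with hzdef
      set A : ℝ := ‖z‖ with hAdef
      have hnext : (fun z : ℂ => z ^ p + c)^[m + 2] 0 = z ^ p + c := by
        rw [Function.iterate_succ_apply']
      have hqm : (1 : ℝ) ≤ q ^ m := one_le_pow₀ hq.le
      have hza : a ≤ A := le_trans (by nlinarith) ih
      have hA0 : 0 ≤ A := norm_nonneg _
      have tri : A ^ p - a ≤ ‖z ^ p + c‖ := by
        have := norm_add_le (z ^ p + c) (-c)
        rw [add_neg_cancel_right, norm_pow, norm_neg] at this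
        simp only [← hadef, ← hAdef] at this
        linarith
      have e5 : a ^ (p - 1) * A ≤ A ^ (p - 1) * A := by
        nlinarith [pow_le_pow_left₀ ha.le hza (p - 1)]
      have e6 : A ^ (p - 1) * A = A ^ p := by
        rw [← pow_succ]; congr 1; omega
      have goal_eq : a * q ^ (m + 1) = (a * q ^ m) * q := by ring
      rw [hnext, goal_eq]
      have e2 : (a * q ^ m) * q ≤ A * q := by nlinarith
      have e3 : A * q = a ^ (p - 1) * A - A := by rw [hqdef]; ring
      have e4 : a ^ (p - 1) * A - A ≤ A ^ p - a := by
        rw [← e6]; linarith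
      linarith
  obtain ⟨n, hn⟩ := pow_unbounded_of_one_lt (M / a) hq
  have h1 := claim n
  have h2 := h (n + 1) (by omega)
  have : M < a * q ^ n := by
    rw [div_lt_iff₀ ha] at hn
    nlinarith
  linarith

theorem tricomplex_multibrot_subset_discus (p : ℕ) (hp : 2 ≤ p)
    (r : ℝ) (hr : r = (2 : ℝ) ^ ((1 : ℝ) / ((p : ℝ) - 1))) :
    M3 p ⊆ {z : (ℂ × ℂ) × (ℂ × ℂ) |
      bcNorm (z.1 - bcMul z.2 i2) ≤ r ∧ bcNorm (z.1 + bcMul z.2 i2) ≤ r} := by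
  intro c hc
  obtain ⟨M, hM⟩ := hc
  have hr0 : 0 ≤ r := by rw [hr]; positivity
  have key : ∀ (s : ℂ), s * s = -1 → ‖s‖ = 1 →
      ∀ (e : ℂ × ℂ), bcMul e e = (-1, 0) → (∀ z, bcNorm (bcMul z e) ≤ bcNorm z) →
      ‖cproj s e c‖ ≤ r := by
    intro s hs habs e he hbe
    rw [hr]
    apply complex_escape p hp (cproj s e c) (4 * M)
    intro m hm
    rw [← cproj_iter s hs e he p c m]
    calc ‖cproj s e ((tcQ p c)^[m] ((0,0),(0,0)))‖
        ≤ 4 * tcNorm ((tcQ p c)^[m] ((0,0),(0,0))) := cproj_abs_le s habs e hbe _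
      _ ≤ 4 * M := by have := hM m hm; linarith
  have hbeI : ∀ z : ℂ × ℂ, bcNorm (bcMul z i2) ≤ bcNorm z := by
    intro z
    have h : bcMul z i2 = (-z.2, z.1) := by simp [bcMul, i2]
    rw [h]
    simp only [bcNorm]
    rw [norm_neg, add_comm]
  have hbeI' : ∀ z : ℂ × ℂ, bcNorm (bcMul z ((0:ℂ), (-1:ℂ))) ≤ bcNorm z := by
    intro z
    have h : bcMul z ((0:ℂ), (-1:ℂ)) = (z.2, -z.1) := by simp [bcMul]
    rw [h]
    simp only [bcNorm]
    rw [norm_neg, add_comm]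
  have heI : bcMul i2 i2 = ((-1 : ℂ), (0 : ℂ)) := by
    simp [bcMul, i2]
  have heI' : bcMul ((0:ℂ), (-1:ℂ)) ((0:ℂ), (-1:ℂ)) = ((-1 : ℂ), (0 : ℂ)) := by
    simp [bcMul]
  have hII : Complex.I * Complex.I = -1 := Complex.I_mul_I
  have hII' : (-Complex.I) * (-Complex.I) = -1 := by rw [neg_mul_neg, Complex.I_mul_I]
  have haI : ‖Complex.I‖ = 1 := Complex.norm_I
  have haI' : ‖-Complex.I‖ = 1 := by rw [norm_neg, Complex.norm_I]
  constructor
  · have heq : c.1 - bcMul c.2 i2 = beta ((0:ℂ), (-1:ℂ)) c := by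
      simp only [beta, bcMul, i2, Prod.ext_iff, Prod.fst_sub, Prod.snd_sub, Prod.fst_add,
        Prod.snd_add]
      constructor <;> ring
    rw [heq]
    apply bcNorm_le_of_proj _ r hr0
    · simpa [cproj, gpr] using key Complex.I hII haI _ heI' hbeI'
    · simpa [cproj, gpr, sub_eq_add_neg, neg_mul] using key (-Complex.I) hII' haI' _ heI' hbeI'
  · have heq : c.1 + bcMul c.2 i2 = beta i2 c := rfl
    rw [heq]
    apply bcNorm_le_of_proj _ r hr0
    · simpa [cproj, gpr] using key Complex.I hII haI _ heI hbeI
    · simpa [cproj, gpr, sub_eq_add_neg, neg_mul] using key (-Complex.I) hII' haI' _ heI hbeI
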